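/- Let 0 < δ < 1 and for i ≥ 0 let J^(i) = {j ∈ J : δ^{−i} ≤ b_j < δ^{−(i+1)}}. Suppose for each k ≥ 0 a set R_k ⊆ J^(2k) is given such that for every edge e_t, the total demand of the jobs of R_k using e_t is at most min(c_t, 2δ^{−(2k+1)}). Then the union R = ∪_k R_k is a feasible round under the augmented capacities ((1+γ)c_t), where γ = 2δ/(1−δ²); i.e., for every edge e_t the total demand of jobs of R using e_t is at most (1+γ)c_t. The analogous statement holds for sets R_k ⊆ J^(2k+1) with per-edge bounds min(c_t, 2δ^{−(2k+2)}). -/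

import Mathlib

open scoped Classical

namespace PathUFP

variable {ι : Type*}

/-- Job `i` uses the edge `e_{k+1}` (for `k : Fin m`, edges being 1-indexed
`e_1, …, e_m`) iff `s_i < k + 1 ≤ t_i`, i.e. iff `s_i ≤ k < t_i`. -/
def uses (s t : ι → ℕ) {m : ℕ} (i : ι) (k : Fin m) : Prop :=
  s i ≤ (k : ℕ) ∧ (k : ℕ) < t i

/-- The bottleneck capacity `b_i = min {c_k : i uses e_k}` of job `i` lies in the
interval `[δ^{-lvl}, δ^{-(lvl+1)})`, i.e. `i ∈ J^(lvl)`: every edge used by `i` has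
capacity at least `δ^{-lvl}`, and some edge used by `i` has capacity less than
`δ^{-(lvl+1)}`. -/
def LevelMem (s t : ι → ℕ) {m : ℕ} (c : Fin m → ℝ) (δ : ℝ) (lvl : ℕ) (i : ι) : Prop :=
  (∀ k : Fin m, uses s t i k → δ ^ (-(lvl : ℤ)) ≤ c k) ∧
  (∃ k : Fin m, uses s t i k ∧ c k < δ ^ (-((lvl : ℤ) + 1)))

end PathUFP

open Finset in
lemma PathUFP.sum_biUnion_le' {ι : Type*} [DecidableEq ι] (f : ι → ℝ)
    (hf : ∀ i, 0 ≤ f i) (S : Finset ℕ) (T : ℕ → Finset ι) :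
    ∑ x ∈ S.biUnion T, f x ≤ ∑ k ∈ S, ∑ x ∈ T k, f x := by
  induction S using Finset.induction_on with
  | empty => simp
  | insert a S' hnot ih =>
    rw [Finset.biUnion_insert, Finset.sum_insert hnot]
    calc ∑ x ∈ T a ∪ S'.biUnion T, f x
        = ∑ x ∈ T a, f x + ∑ x ∈ (S'.biUnion T) \ T a, f x := by
          rw [← Finset.sum_union (Finset.disjoint_sdiff), Finset.union_sdiff_self_eq_union]
      _ ≤ ∑ x ∈ T a, f x + ∑ x ∈ S'.biUnion T, f x :=
          add_le_add_right (Finset.sum_le_sum_of_subset_of_nonneg (Finset.sdiff_subset)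
            (fun i _ _ => hf i)) _
      _ ≤ _ := by gcongr

open Finset in
lemma PathUFP.geom_sum_le {δ : ℝ} (hδ0 : 0 < δ) (hδ1 : δ < 1) (o : ℕ) (n : ℕ) :
    ∑ k ∈ range n, δ ^ (-(2 * (k : ℤ) + o + 1)) ≤ δ ^ (-(2 * (n : ℤ) + o)) * δ / (1 - δ ^ 2) := by
  have hδ2 : (0:ℝ) < 1 - δ ^ 2 := by nlinarith
  induction n with
  | zero => simp; positivity
  | succ n ih =>
    rw [Finset.sum_range_succ]
    have hx : (0:ℝ) < δ ^ (-(2 * (n : ℤ) + o + 1)) := by positivity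
    set x := δ ^ (-(2 * (n : ℤ) + o + 1)) with hxdef
    have h1 : δ ^ (-(2 * (n : ℤ) + o)) = x * δ := by
      rw [hxdef, show -(2 * (n : ℤ) + o) = -(2 * (n : ℤ) + o + 1) + 1 by ring,
        zpow_add₀ hδ0.ne', zpow_one]
    have h2 : δ ^ (-(2 * ((n : ℤ) + 1) + o)) = x * δ⁻¹ := by
      rw [hxdef, show -(2 * ((n : ℤ) + 1) + o) = -(2 * (n : ℤ) + o + 1) + (-1) by ring,
        zpow_add₀ hδ0.ne', zpow_neg_one]
    rw [h1] at ih
    have hc : ((n : ℤ) + 1) = ((n + 1 : ℕ) : ℤ) := by push_cast; ring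
    rw [← hc, h2]
    have ih' : (∑ k ∈ range n, δ ^ (-(2 * (k : ℤ) + o + 1))) * (1 - δ ^ 2) ≤ x * δ * δ := by
      rw [← le_div_iff₀ hδ2]; exact ih
    rw [mul_assoc, inv_mul_cancel₀ hδ0.ne', mul_one, le_div_iff₀ hδ2]
    nlinarith [ih', hx.le]

open PathUFP Finset in
lemma PathUFP.aux {ι : Type*} [Fintype ι] {m : ℕ}
    (c : Fin m → ℝ) (hc : ∀ k, 0 < c k)
    (s t : ι → ℕ) (d : ι → ℝ) (hd : ∀ i, 0 < d i)
    (δ : ℝ) (hδ0 : 0 < δ) (hδ1 : δ < 1) (o : ℕ)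
    (R : ℕ → Finset ι)
    (hR : ∀ k : ℕ, ∀ i ∈ R k, LevelMem s t c δ (2 * k + o) i)
    (hcap : ∀ (k : ℕ) (e : Fin m),
      (∑ i ∈ R k, if uses s t i e then d i else 0)
        ≤ min (c e) (2 * δ ^ (-(2 * (k : ℤ) + o + 1))))
    (e : Fin m) :
    (∑ i : ι, if (∃ k : ℕ, i ∈ R k) ∧ uses s t i e then d i else 0)
      ≤ (1 + 2 * δ / (1 - δ ^ 2)) * c e := by
  have hδ2 : (0:ℝ) < 1 - δ ^ 2 := by nlinarith
  have hγ : (0:ℝ) ≤ 2 * δ / (1 - δ ^ 2) := by positivity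
  by_cases hex : ∃ k i, i ∈ R k ∧ uses s t i e
  · obtain ⟨k0, i0, hi0, hu0⟩ := hex
    -- P k : level 2k+o is relevant for edge e
    set P : ℕ → Prop := fun k => δ ^ (-(2 * (k : ℤ) + o)) ≤ c e with hP
    have hlev : ∀ k i, i ∈ R k → uses s t i e → P k := by
      intro k i hi hu
      have := (hR k i hi).1 e hu
      have hcast : -(((2 * k + o : ℕ)) : ℤ) = -(2 * (k : ℤ) + o) := by push_cast; ring
      rw [hcast] at this
      exact this
    -- bound on relevant levels
    obtain ⟨N, hN⟩ := pow_unbounded_of_one_lt (c e) (one_lt_inv₀ hδ0 |>.2 hδ1)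
    have hNb : c e < δ ^ (-(N : ℤ)) := by
      rwa [zpow_neg, zpow_natCast, ← inv_pow]
    have hbound : ∀ k, P k → k < N := by
      intro k hk
      have hlt : δ ^ (-(2 * (k : ℤ) + o)) < δ ^ (-(N : ℤ)) := lt_of_le_of_lt hk hNb
      have := (zpow_lt_zpow_iff_right_of_lt_one₀ hδ0 hδ1).1 hlt
      omega
    have hPk0 : P k0 := hlev k0 i0 hi0 hu0
    set K := Nat.findGreatest P N with hK
    have hPK : P K := Nat.findGreatest_spec (hbound k0 hPk0).le hPk0
    have hmax : ∀ k, P k → k ≤ K := fun k hk => Nat.le_findGreatest (hbound k hk).le hk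
    -- step 1 : restrict the sum
    have hstep1 : (∑ i : ι, if (∃ k : ℕ, i ∈ R k) ∧ uses s t i e then d i else 0)
        ≤ ∑ k ∈ range (K + 1), ∑ i ∈ R k, if uses s t i e then d i else 0 := by
      classical
      have hL : (∑ i : ι, if (∃ k : ℕ, i ∈ R k) ∧ uses s t i e then d i else 0)
          = ∑ i ∈ univ.filter (fun i => (∃ k : ℕ, i ∈ R k) ∧ uses s t i e), d i := by
        rw [Finset.sum_filter]
      have hRk : ∀ k, (∑ i ∈ R k, if uses s t i e then d i else 0)
          = ∑ i ∈ (R k).filter (fun i => uses s t i e), d i := fun k => by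
        rw [Finset.sum_filter]
      rw [hL]
      simp_rw [hRk]
      have hsub : univ.filter (fun i => (∃ k : ℕ, i ∈ R k) ∧ uses s t i e)
          ⊆ (range (K + 1)).biUnion (fun k => (R k).filter (fun i => uses s t i e)) := by
        intro i hi
        simp only [Finset.mem_filter, Finset.mem_univ, true_and] at hi
        obtain ⟨⟨k, hk⟩, hu⟩ := hi
        have hkK : k ≤ K := hmax k (hlev k i hk hu)
        exact Finset.mem_biUnion.2 ⟨k, Finset.mem_range.2 (by omega),
          Finset.mem_filter.2 ⟨hk, hu⟩⟩
      calc _ ≤ ∑ i ∈ (range (K + 1)).biUnion (fun k => (R k).filter (fun i => uses s t i e)), d i :=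
             Finset.sum_le_sum_of_subset_of_nonneg hsub (fun i _ _ => (hd i).le)
        _ ≤ _ := PathUFP.sum_biUnion_le' d (fun i => (hd i).le) _ _
    -- step 2 : bound the per-level sums
    have hstep2 : (∑ k ∈ range (K + 1), ∑ i ∈ R k, if uses s t i e then d i else 0)
        ≤ c e + ∑ k ∈ range K, 2 * δ ^ (-(2 * (k : ℤ) + o + 1)) := by
      rw [Finset.sum_range_succ]
      have h1 : (∑ i ∈ R K, if uses s t i e then d i else 0) ≤ c e :=
        (hcap K e).trans (min_le_left _ _)
      have h2 : (∑ k ∈ range K, ∑ i ∈ R k, if uses s t i e then d i else 0)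
          ≤ ∑ k ∈ range K, 2 * δ ^ (-(2 * (k : ℤ) + o + 1)) :=
        Finset.sum_le_sum (fun k _ => (hcap k e).trans (min_le_right _ _))
      linarith
    -- step 3 : geometric bound
    have hstep3 : (∑ k ∈ range K, 2 * δ ^ (-(2 * (k : ℤ) + o + 1)))
        ≤ 2 * δ / (1 - δ ^ 2) * c e := by
      rw [← Finset.mul_sum]
      have hg := PathUFP.geom_sum_le hδ0 hδ1 o K
      have : δ ^ (-(2 * (K : ℤ) + o)) * δ ≤ c e * δ := by
        have := mul_le_mul_of_nonneg_right hPK hδ0.le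
        linarith
      have h4 : (∑ k ∈ range K, δ ^ (-(2 * (k : ℤ) + o + 1))) ≤ c e * δ / (1 - δ ^ 2) := by
        calc _ ≤ δ ^ (-(2 * (K : ℤ) + o)) * δ / (1 - δ ^ 2) := hg
          _ ≤ c e * δ / (1 - δ ^ 2) := by gcongr
      calc 2 * ∑ k ∈ range K, δ ^ (-(2 * (k : ℤ) + o + 1))
          ≤ 2 * (c e * δ / (1 - δ ^ 2)) := by linarith
        _ = 2 * δ / (1 - δ ^ 2) * c e := by ring
    calc _ ≤ _ := hstep1
      _ ≤ _ := hstep2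
      _ ≤ c e + 2 * δ / (1 - δ ^ 2) * c e := by linarith
      _ = (1 + 2 * δ / (1 - δ ^ 2)) * c e := by ring
  · have : (∑ i : ι, if (∃ k : ℕ, i ∈ R k) ∧ uses s t i e then d i else 0) = 0 := by
      apply Finset.sum_eq_zero
      intro i _
      rw [if_neg]
      rintro ⟨⟨k, hk⟩, hu⟩
      exact hex ⟨k, i, hk, hu⟩
    rw [this]
    have := hc e
    positivity

open PathUFP in
/-- Let `0 < δ < 1` and for `i ≥ 0` let
`J^(i) = {j ∈ J : δ^{−i} ≤ b_j < δ^{−(i+1)}}`. Suppose for each `k ≥ 0` a set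
`R_k ⊆ J^(2k)` is given such that on every edge the total demand of the jobs of `R_k`
using it is at most `min(c_e, 2δ^{−(2k+1)})`. Then the union `R = ∪_k R_k` is a feasible
round under the augmented capacities `((1+γ) c_e)` where `γ = 2δ/(1−δ²)`. The analogous
statement holds for sets `R_k ⊆ J^(2k+1)` with per-edge bounds `min(c_e, 2δ^{−(2k+2)})`. -/
theorem combine_levels_resource_augmentation {ι : Type*} [Fintype ι] {m : ℕ}
    (c : Fin m → ℝ) (hc : ∀ k, 0 < c k)
    (s t : ι → ℕ) (d : ι → ℝ)
    (hst : ∀ i, s i < t i) (htm : ∀ i, t i ≤ m) (hd : ∀ i, 0 < d i)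
    (δ : ℝ) (hδ0 : 0 < δ) (hδ1 : δ < 1) :
    (∀ R : ℕ → Finset ι,
      (∀ k : ℕ, ∀ i ∈ R k, LevelMem s t c δ (2 * k) i) →
      (∀ (k : ℕ) (e : Fin m),
        (∑ i ∈ R k, if uses s t i e then d i else 0)
          ≤ min (c e) (2 * δ ^ (-(2 * (k : ℤ) + 1)))) →
      ∀ e : Fin m,
        (∑ i : ι, if (∃ k : ℕ, i ∈ R k) ∧ uses s t i e then d i else 0)
          ≤ (1 + 2 * δ / (1 - δ ^ 2)) * c e) ∧
    (∀ R : ℕ → Finset ι,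
      (∀ k : ℕ, ∀ i ∈ R k, LevelMem s t c δ (2 * k + 1) i) →
      (∀ (k : ℕ) (e : Fin m),
        (∑ i ∈ R k, if uses s t i e then d i else 0)
          ≤ min (c e) (2 * δ ^ (-(2 * (k : ℤ) + 2)))) →
      ∀ e : Fin m,
        (∑ i : ι, if (∃ k : ℕ, i ∈ R k) ∧ uses s t i e then d i else 0)
          ≤ (1 + 2 * δ / (1 - δ ^ 2)) * c e) := by
  constructor
  · intro R hR hcap e
    refine PathUFP.aux c hc s t d hd δ hδ0 hδ1 0 R (fun k i h => by simpa using hR k i h)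
      (fun k e => ?_) e
    have := hcap k e
    convert this using 4
    omega
  · intro R hR hcap e
    refine PathUFP.aux c hc s t d hd δ hδ0 hδ1 1 R (fun k i h => by simpa using hR k i h)
      (fun k e => ?_) e
    have := hcap k e
    convert this using 4
    omega
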